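/- Let n ≥ 2, a > 0, and let g be the n-dimensional real vector space with basis e₁,…,eₙ equipped with the bracket determined by [e_i,e_j] = 0 for 1 ≤ i,j ≤ n−1 and [eₙ,e_i] = a·e_i for 1 ≤ i ≤ n−1. Then g is a (solvable) Lie algebra, and the inner product α making e₁,…,eₙ orthonormal is cyclic: α([x,y],z) + α([y,z],x) + α([z,x],y) = 0 for all x,y,z ∈ g. -/

import Mathlib

noncomputable section

/-- The inner product making the basis `e` orthonormal. -/
def basisInner {V : Type*} [AddCommGroup V] [Module ℝ V] {ι : Type*} [Fintype ι]
    (e : Module.Basis ι ℝ V) (x y : V) : ℝ :=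
  ∑ k, e.repr x k * e.repr y k

theorem basisInner_comm {V : Type*} [AddCommGroup V] [Module ℝ V] {ι : Type*} [Fintype ι]
    (e : Module.Basis ι ℝ V) (x y : V) : basisInner e x y = basisInner e y x := by
  unfold basisInner; exact Finset.sum_congr rfl fun k _ => mul_comm _ _

theorem basisInner_smul_sub {V : Type*} [AddCommGroup V] [Module ℝ V] {ι : Type*} [Fintype ι]
    (e : Module.Basis ι ℝ V) (c d : ℝ) (u v z : V) :
    basisInner e (c • u - d • v) z = c * basisInner e u z - d * basisInner e v z := by
  unfold basisInner
  rw [Finset.mul_sum, Finset.mul_sum, ← Finset.sum_sub_distrib]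
  refine Finset.sum_congr rfl fun k _ => ?_
  simp [mul_sub, sub_mul, mul_assoc]

/-- The bilinear bracket determined by `[e_i,e_j] = 0` for
`i,j ≤ n−1` and `[eₙ,e_i] = a·e_i` makes the `n`-dimensional real vector space a
(solvable) Lie algebra, and the inner product making `e₁,…,eₙ` orthonormal is cyclic. -/
theorem solvable_example_is_lie_algebra_and_cyclic
    {V : Type*} [AddCommGroup V] [Module ℝ V]
    (n : ℕ) (hn : 2 ≤ n) (a : ℝ) (ha : 0 < a)
    (e : Module.Basis (Fin n) ℝ V)
    (ℓ : Fin n) (hℓ : (ℓ : ℕ) = n - 1)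
    (br : V →ₗ[ℝ] V →ₗ[ℝ] V)
    (hbr1 : ∀ i j : Fin n, i ≠ ℓ → j ≠ ℓ → br (e i) (e j) = 0)
    (hbr2 : ∀ i : Fin n, i ≠ ℓ → br (e ℓ) (e i) = a • e i)
    (hbr3 : ∀ i : Fin n, i ≠ ℓ → br (e i) (e ℓ) = -(a • e i))
    (hbr4 : br (e ℓ) (e ℓ) = 0) :
    -- `br` is a Lie bracket:
    (∀ x : V, br x x = 0)
      ∧ (∀ x y z : V, br x (br y z) = br (br x y) z + br y (br x z))
      -- which is solvable:
      ∧ (∀ x y z w : V, br (br x y) (br z w) = 0)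
      -- and the inner product making `e` orthonormal is cyclic:
      ∧ (∀ x y z : V,
          basisInner e (br x y) z + basisInner e (br y z) x
            + basisInner e (br z x) y = 0) := by
  set φ : V →ₗ[ℝ] ℝ := e.coord ℓ with hφ
  -- explicit formula for the bracket
  have key : ∀ x y : V, br x y = (a * φ x) • y - (a * φ y) • x := by
    have : br = LinearMap.mk₂ ℝ (fun x y => (a * φ x) • y - (a * φ y) • x)
        (by intro x x' y; simp [add_smul, mul_add, smul_add]; abel)
        (by intro c x y; simp [mul_assoc, smul_smul, mul_left_comm]; module)
        (by intro x y y'; simp [add_smul, mul_add, smul_add]; abel)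
        (by intro c x y; simp [mul_assoc, smul_smul, mul_left_comm]; module) := by
      apply e.ext; intro i
      apply e.ext; intro j
      have hc : ∀ k : Fin n, φ (e k) = if k = ℓ then 1 else 0 := by
        intro k
        simp [hφ, Module.Basis.coord_apply, Module.Basis.repr_self, Finsupp.single_apply]
      by_cases hi : i = ℓ <;> by_cases hj : j = ℓ
      · subst hi; subst hj; simp [hc, hbr4]
      · subst hi; simp [hc, hj]; exact hbr2 j hj
      · subst hj; simp [hc, hi]; rw [hbr3 i hi]
      · simp [hc, hi, hj, hbr1 i j hi hj]
    rw [this]; intro x y; rfl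
  have hφbr : ∀ x y : V, φ (br x y) = 0 := by
    intro x y
    rw [key, map_sub, map_smul, map_smul]
    simp [smul_eq_mul]; ring
  refine ⟨?_, ?_, ?_, ?_⟩
  · intro x; rw [key]; ring_nf; abel
  · intro x y z
    rw [key x (br y z), key (br x y) z, key y (br x z), hφbr, hφbr, hφbr,
      key y z, key x y, key x z]
    simp only [mul_zero, zero_smul, sub_zero, zero_sub, smul_sub, smul_smul]
    ring_nf
    abel
  · intro x y z w
    rw [key (br x y) (br z w), hφbr, hφbr]
    simp
  · intro x y z
    rw [key x y, key y z, key z x,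
      basisInner_smul_sub, basisInner_smul_sub, basisInner_smul_sub,
      basisInner_comm e y z, basisInner_comm e z x, basisInner_comm e x y]
    ring
end
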